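/- Let g : ℝ^n → ℝ^m be three times continuously differentiable and define G(z; u) = (g(x), (dg_x)ᵀλ − u + x) for z = (x,λ) ∈ ℝ^n × ℝ^m and parameter u ∈ ℝ^n. Suppose z and z′ are points with G(z; u) = 0 and G(z′; u′) = 0 for parameters u, u′ ∈ ℝ^n, and that the partial derivative ∂G/∂z at (z,u) is invertible. Define the Euler prediction step Δz = −(∂G/∂z (z,u))⁻¹ · (∂G/∂u (z,u)) · (u′ − u), and let M ≥ sup (1/2) · ‖(∂G/∂z (z,u))⁻¹‖ · ‖∂²G/∂z² (ξ, μ)‖, where the supremum is over all (ξ,μ) on the line segment between (z,u) and (z′,u′). Then ‖z′ − z − Δz‖ ≤ M · ‖z′ − z‖². -/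

import Mathlib

/-- The Lagrange multiplier map `G(z; w) = (g x, (dg_x)ᵀ λ − w + x)`, `z = (x, λ)`. -/
noncomputable def lagrangeG {n m : ℕ}
    (g : EuclideanSpace ℝ (Fin n) → EuclideanSpace ℝ (Fin m))
    (w : EuclideanSpace ℝ (Fin n))
    (z : EuclideanSpace ℝ (Fin n) × EuclideanSpace ℝ (Fin m)) :
    EuclideanSpace ℝ (Fin m) × EuclideanSpace ℝ (Fin n) :=
  (g z.1, ContinuousLinearMap.adjoint (fderiv ℝ g z.1) z.2 - w + z.1)


open Set

lemma taylor_one_bound {P Q : Type*} [NormedAddCommGroup P] [NormedSpace ℝ P]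
    [NormedAddCommGroup Q] [NormedSpace ℝ Q] (F : P → Q) (hF : ContDiff ℝ 2 F)
    (a b : P) (K : ℝ)
    (hK : ∀ ξ ∈ segment ℝ a b, ‖fderiv ℝ (fderiv ℝ F) ξ‖ ≤ K) :
    ‖F b - F a - fderiv ℝ F a (b - a)‖ ≤ K / 2 * ‖b - a‖ ^ 2 := by
  set v := b - a with hv
  have hF1 : ContDiff ℝ 1 (fderiv ℝ F) := hF.fderiv_right (by norm_num)
  have hFd : Differentiable ℝ F := hF.differentiable (by norm_num)
  -- Lipschitz-type bound for fderiv F on the segment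
  have hlip : ∀ ξ ∈ segment ℝ a b, ‖fderiv ℝ F ξ - fderiv ℝ F a‖ ≤ K * ‖ξ - a‖ := by
    intro ξ hξ
    exact (convex_segment a b).norm_image_sub_le_of_norm_fderiv_le
      (fun x _ => (hF1.differentiable (by norm_num) x)) hK (left_mem_segment ℝ a b) hξ
  set f : ℝ → Q := fun t => F (a + t • v) - F a - t • (fderiv ℝ F a v) with hf
  have hmem : ∀ t ∈ Icc (0:ℝ) 1, a + t • v ∈ segment ℝ a b := by
    intro t ht
    rw [segment_eq_image']
    exact ⟨t, ht, rfl⟩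
  have hder : ∀ t : ℝ, HasDerivAt f (fderiv ℝ F (a + t • v) v - fderiv ℝ F a v) t := by
    intro t
    have hγ : HasDerivAt (fun t : ℝ => a + t • v) v t := by
      simpa using ((hasDerivAt_id t).smul_const v).const_add a
    have h1 : HasDerivAt (fun t : ℝ => F (a + t • v)) (fderiv ℝ F (a + t • v) v) t :=
      (hFd (a + t • v)).hasFDerivAt.comp_hasDerivAt t hγ
    have h2 : HasDerivAt (fun t : ℝ => t • (fderiv ℝ F a v)) (fderiv ℝ F a v) t := by
      simpa using (hasDerivAt_id t).smul_const (fderiv ℝ F a v)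
    exact (h1.sub_const (F a)).sub h2
  have hbound : ∀ t ∈ Ico (0:ℝ) 1,
      ‖fderiv ℝ F (a + t • v) v - fderiv ℝ F a v‖ ≤ K * ‖v‖ ^ 2 * t := by
    intro t ht
    have ht' : t ∈ Icc (0:ℝ) 1 := ⟨ht.1, le_of_lt ht.2⟩
    have hseg := hmem t ht'
    have h1 : ‖fderiv ℝ F (a + t • v) v - fderiv ℝ F a v‖
        ≤ ‖fderiv ℝ F (a + t • v) - fderiv ℝ F a‖ * ‖v‖ := by
      simpa using (fderiv ℝ F (a + t • v) - fderiv ℝ F a).le_opNorm v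
    have h2 := hlip _ hseg
    have h3 : ‖a + t • v - a‖ = t * ‖v‖ := by
      rw [add_sub_cancel_left, norm_smul, Real.norm_eq_abs, abs_of_nonneg ht.1]
    calc ‖fderiv ℝ F (a + t • v) v - fderiv ℝ F a v‖
        ≤ ‖fderiv ℝ F (a + t • v) - fderiv ℝ F a‖ * ‖v‖ := h1
      _ ≤ K * (t * ‖v‖) * ‖v‖ := by
          rw [← h3]
          exact mul_le_mul_of_nonneg_right h2 (norm_nonneg v)
      _ = K * ‖v‖ ^ 2 * t := by ring
  have hB : ∀ t : ℝ, HasDerivAt (fun t => K * ‖v‖ ^ 2 / 2 * t ^ 2) (K * ‖v‖ ^ 2 * t) t := by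
    intro t
    have h := (hasDerivAt_pow 2 t).const_mul (K * ‖v‖ ^ 2 / 2)
    refine h.congr_deriv ?_
    push_cast
    ring
  have key : ∀ x ∈ Icc (0:ℝ) 1, ‖f x‖ ≤ K * ‖v‖ ^ 2 / 2 * x ^ 2 :=
    fun x hx => image_norm_le_of_norm_deriv_right_le_deriv_boundary
      (fun t _ => ((hder t).continuousAt).continuousWithinAt)
      (fun t _ => (hder t).hasDerivWithinAt)
      (by simp [hf]) hB hbound hx
  have h1 := key 1 ⟨zero_le_one, le_rfl⟩
  have : f 1 = F b - F a - fderiv ℝ F a (b - a) := by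
    simp [hf, hv]
  rw [this] at h1
  calc ‖F b - F a - fderiv ℝ F a (b - a)‖ ≤ K * ‖v‖ ^ 2 / 2 * 1 ^ 2 := h1
    _ = K / 2 * ‖b - a‖ ^ 2 := by rw [hv]; ring


lemma lagrangeG_contDiff {n m : ℕ}
    {g : EuclideanSpace ℝ (Fin n) → EuclideanSpace ℝ (Fin m)}
    (hg : ContDiff ℝ 3 g) (w : EuclideanSpace ℝ (Fin n)) :
    ContDiff ℝ 2 (lagrangeG g w) := by
  have h1 : ContDiff ℝ 2 (fderiv ℝ g) := hg.fderiv_right (by norm_num)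
  have hadj : IsBoundedLinearMap ℝ
      (fun B : EuclideanSpace ℝ (Fin n) →L[ℝ] EuclideanSpace ℝ (Fin m) =>
        ContinuousLinearMap.adjoint B) := by
    refine ⟨⟨fun A B => map_add _ A B, fun r B => ?_⟩, 1, one_pos, fun B => ?_⟩
    · rw [LinearIsometryEquiv.map_smulₛₗ]
      simp
    · rw [one_mul, LinearIsometryEquiv.norm_map]
  have h2 : ContDiff ℝ 2 fun z : EuclideanSpace ℝ (Fin n) × EuclideanSpace ℝ (Fin m) =>
      ContinuousLinearMap.adjoint (fderiv ℝ g z.1) :=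
    hadj.contDiff.comp (h1.comp contDiff_fst)
  have h3 : ContDiff ℝ 2 fun z : EuclideanSpace ℝ (Fin n) × EuclideanSpace ℝ (Fin m) =>
      ContinuousLinearMap.adjoint (fderiv ℝ g z.1) z.2 := by
    have := isBoundedBilinearMap_apply.contDiff.comp (h2.prodMk contDiff_snd)
      (𝕜 := ℝ)
    exact this
  exact ((hg.of_le (by norm_num)).comp contDiff_fst).prodMk
    (((h3.sub contDiff_const).add contDiff_fst))


/-- Quadratic accuracy of the Euler prediction step (the estimate in the proof of
Corollary 2.9): if `G(z;u) = 0`, `G(z';u') = 0`, `∂G/∂z(z,u)` is invertible,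
`Δz = −(∂G/∂z(z,u))⁻¹ ∂G/∂u(z,u) (u' − u)` is the Euler predictor, and `M` bounds
`(1/2) ‖(∂G/∂z(z,u))⁻¹‖ ‖∂²G/∂z²(ξ,μ)‖` over the segment between `(z,u)` and `(z',u')`,
then `‖z' − z − Δz‖ ≤ M ‖z' − z‖²`. -/
theorem euler_prediction_quadratic_estimate
    (n m : ℕ) (g : EuclideanSpace ℝ (Fin n) → EuclideanSpace ℝ (Fin m))
    (hg : ContDiff ℝ 3 g)
    (z z' : EuclideanSpace ℝ (Fin n) × EuclideanSpace ℝ (Fin m))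
    (u u' : EuclideanSpace ℝ (Fin n))
    (hz : lagrangeG g u z = 0) (hz' : lagrangeG g u' z' = 0)
    (D : (EuclideanSpace ℝ (Fin n) × EuclideanSpace ℝ (Fin m)) ≃L[ℝ]
        (EuclideanSpace ℝ (Fin m) × EuclideanSpace ℝ (Fin n)))
    (hD : (D : (EuclideanSpace ℝ (Fin n) × EuclideanSpace ℝ (Fin m)) →L[ℝ]
        (EuclideanSpace ℝ (Fin m) × EuclideanSpace ℝ (Fin n))) =
      fderiv ℝ (lagrangeG g u) z)
    (Δz : EuclideanSpace ℝ (Fin n) × EuclideanSpace ℝ (Fin m))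
    (hΔz : Δz = -(D.symm ((fderiv ℝ (fun w => lagrangeG g w z) u) (u' - u))))
    (M : ℝ)
    (hM : ∀ q ∈ segment ℝ
        ((z, u) : (EuclideanSpace ℝ (Fin n) × EuclideanSpace ℝ (Fin m)) ×
          EuclideanSpace ℝ (Fin n)) (z', u'),
      (1 / 2) * ‖(D.symm : (EuclideanSpace ℝ (Fin m) × EuclideanSpace ℝ (Fin n)) →L[ℝ]
            (EuclideanSpace ℝ (Fin n) × EuclideanSpace ℝ (Fin m)))‖ *
          ‖fderiv ℝ (fun w => fderiv ℝ (lagrangeG g q.2) w) q.1‖ ≤ M) :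
    ‖z' - z - Δz‖ ≤ M * ‖z' - z‖ ^ 2 := by
  -- shifting the parameter only adds a constant
  have hshift : ∀ (w : EuclideanSpace ℝ (Fin n))
      (ξ : EuclideanSpace ℝ (Fin n) × EuclideanSpace ℝ (Fin m)),
      lagrangeG g w ξ = lagrangeG g u ξ
        + (((0 : EuclideanSpace ℝ (Fin m)), u - w) :
            EuclideanSpace ℝ (Fin m) × EuclideanSpace ℝ (Fin n)) := by
    intro w ξ
    simp only [lagrangeG, Prod.mk_add_mk, Prod.mk.injEq]
    constructor
    · rw [add_zero]
    · abel
  have hfeq : ∀ w : EuclideanSpace ℝ (Fin n),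
      fderiv ℝ (lagrangeG g w) = fderiv ℝ (lagrangeG g u) := by
    intro w
    funext ξ
    rw [show lagrangeG g w = fun ξ => lagrangeG g u ξ
        + (((0 : EuclideanSpace ℝ (Fin m)), u - w)) from funext (hshift w),
      fderiv_add_const]
  have hGc : ContDiff ℝ 2 (lagrangeG g u) := lagrangeG_contDiff hg u
  -- compute the u-derivative and hence Δz
  have hL : HasFDerivAt (fun w => lagrangeG g w z)
      (-(ContinuousLinearMap.inr ℝ (EuclideanSpace ℝ (Fin m)) (EuclideanSpace ℝ (Fin n)))) u := by
    have heq : (fun w : EuclideanSpace ℝ (Fin n) => lagrangeG g w z)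
        = fun w : EuclideanSpace ℝ (Fin n) =>
          (((0 : EuclideanSpace ℝ (Fin m)), u) :
            EuclideanSpace ℝ (Fin m) × EuclideanSpace ℝ (Fin n))
          - (ContinuousLinearMap.inr ℝ (EuclideanSpace ℝ (Fin m))
              (EuclideanSpace ℝ (Fin n))) w := by
      funext w
      rw [hshift w z, hz, zero_add]
      rw [Prod.ext_iff]
      constructor
      · simp
      · simp [sub_eq_add_neg]
    rw [heq]
    simpa using (ContinuousLinearMap.inr ℝ (EuclideanSpace ℝ (Fin m))
      (EuclideanSpace ℝ (Fin n))).hasFDerivAt.const_sub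
        (((0 : EuclideanSpace ℝ (Fin m)), u))
  have hΔ : Δz = D.symm (((0 : EuclideanSpace ℝ (Fin m)), u' - u)) := by
    rw [hΔz, hL.fderiv]
    have h1 : (-(ContinuousLinearMap.inr ℝ (EuclideanSpace ℝ (Fin m))
        (EuclideanSpace ℝ (Fin n)))) (u' - u)
        = -(((0 : EuclideanSpace ℝ (Fin m)), u' - u)) := by
      simp [Prod.ext_iff]
    rw [h1, map_neg, neg_neg]
  -- values of F := lagrangeG g u'
  have hFz : lagrangeG g u' z = (((0 : EuclideanSpace ℝ (Fin m)), u - u')) := by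
    rw [hshift u' z, hz, zero_add]
  have hFder : fderiv ℝ (lagrangeG g u') z
      = (D : (EuclideanSpace ℝ (Fin n) × EuclideanSpace ℝ (Fin m)) →L[ℝ]
          (EuclideanSpace ℝ (Fin m) × EuclideanSpace ℝ (Fin n))) := by
    rw [hfeq u', ← hD]
  -- maximize the norm of the second derivative on the segment
  have hcomp : IsCompact (segment ℝ z z') := by
    rw [segment_eq_image']
    exact isCompact_Icc.image (continuous_const.add (continuous_id.smul continuous_const))
  have hcont : ContinuousOn (fun ξ => ‖fderiv ℝ (fderiv ℝ (lagrangeG g u)) ξ‖)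
      (segment ℝ z z') :=
    (((hGc.fderiv_right (m := 1) (by norm_num)).continuous_fderiv (by norm_num)).norm).continuousOn
  obtain ⟨ξ₀, hξ₀mem, hξ₀max⟩ :=
    hcomp.exists_isMaxOn ⟨z, left_mem_segment ℝ z z'⟩ hcont
  set K := ‖fderiv ℝ (fderiv ℝ (lagrangeG g u)) ξ₀‖ with hKdef
  have hK : ∀ ξ ∈ segment ℝ z z', ‖fderiv ℝ (fderiv ℝ (lagrangeG g u)) ξ‖ ≤ K :=
    fun ξ hξ => hξ₀max hξ
  -- relate K to M via hM
  obtain ⟨s, t, hs, ht, hst, hξ₀⟩ := hξ₀mem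
  have hq₀mem : ((ξ₀, s • u + t • u') :
      (EuclideanSpace ℝ (Fin n) × EuclideanSpace ℝ (Fin m)) × EuclideanSpace ℝ (Fin n))
      ∈ segment ℝ ((z, u)) (z', u') := by
    refine ⟨s, t, hs, ht, hst, ?_⟩
    rw [← hξ₀]; rfl
  have hMK : (1 / 2) * ‖(D.symm : (EuclideanSpace ℝ (Fin m) × EuclideanSpace ℝ (Fin n)) →L[ℝ]
      (EuclideanSpace ℝ (Fin n) × EuclideanSpace ℝ (Fin m)))‖ * K ≤ M := by
    have h := hM _ hq₀mem
    simpa only [hfeq] using h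
  -- Taylor estimate
  have htay := taylor_one_bound (lagrangeG g u') (lagrangeG_contDiff hg u') z z' K
    (by
      intro ξ hξ
      rw [hfeq u']
      exact hK ξ hξ)
  rw [hz', hFz, hFder] at htay
  -- rewrite the goal
  have hgoal : z' - z - Δz = D.symm
      ((D : (EuclideanSpace ℝ (Fin n) × EuclideanSpace ℝ (Fin m)) →L[ℝ]
        (EuclideanSpace ℝ (Fin m) × EuclideanSpace ℝ (Fin n))) (z' - z)
      - (((0 : EuclideanSpace ℝ (Fin m)), u' - u))) := by
    rw [hΔ, map_sub]
    congr 1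
    exact (D.symm_apply_apply (z' - z)).symm
  have hnorm1 : ‖z' - z - Δz‖
      ≤ ‖(D.symm : (EuclideanSpace ℝ (Fin m) × EuclideanSpace ℝ (Fin n)) →L[ℝ]
          (EuclideanSpace ℝ (Fin n) × EuclideanSpace ℝ (Fin m)))‖ *
        ‖(D : (EuclideanSpace ℝ (Fin n) × EuclideanSpace ℝ (Fin m)) →L[ℝ]
          (EuclideanSpace ℝ (Fin m) × EuclideanSpace ℝ (Fin n))) (z' - z)
          - (((0 : EuclideanSpace ℝ (Fin m)), u' - u))‖ := by
    rw [hgoal]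
    exact ContinuousLinearMap.le_opNorm
      (D.symm : (EuclideanSpace ℝ (Fin m) × EuclideanSpace ℝ (Fin n)) →L[ℝ]
        (EuclideanSpace ℝ (Fin n) × EuclideanSpace ℝ (Fin m))) _
  have hswap : ‖(D : (EuclideanSpace ℝ (Fin n) × EuclideanSpace ℝ (Fin m)) →L[ℝ]
      (EuclideanSpace ℝ (Fin m) × EuclideanSpace ℝ (Fin n))) (z' - z)
      - (((0 : EuclideanSpace ℝ (Fin m)), u' - u))‖
      = ‖0 - (((0 : EuclideanSpace ℝ (Fin m)), u - u'))
        - (D : (EuclideanSpace ℝ (Fin n) × EuclideanSpace ℝ (Fin m)) →L[ℝ]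
          (EuclideanSpace ℝ (Fin m) × EuclideanSpace ℝ (Fin n))) (z' - z)‖ := by
    rw [norm_sub_rev]
    congr 1
    rw [zero_sub, Prod.neg_mk, neg_zero, neg_sub]
  calc ‖z' - z - Δz‖
      ≤ ‖(D.symm : (EuclideanSpace ℝ (Fin m) × EuclideanSpace ℝ (Fin n)) →L[ℝ]
          (EuclideanSpace ℝ (Fin n) × EuclideanSpace ℝ (Fin m)))‖
          * (K / 2 * ‖z' - z‖ ^ 2) := by
        refine hnorm1.trans ?_
        refine mul_le_mul_of_nonneg_left ?_ (norm_nonneg _)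
        rw [hswap]
        exact htay
    _ = ((1 / 2) * ‖(D.symm : (EuclideanSpace ℝ (Fin m) × EuclideanSpace ℝ (Fin n)) →L[ℝ]
          (EuclideanSpace ℝ (Fin n) × EuclideanSpace ℝ (Fin m)))‖ * K) * ‖z' - z‖ ^ 2 := by
        ring
    _ ≤ M * ‖z' - z‖ ^ 2 := mul_le_mul_of_nonneg_right hMK (sq_nonneg _)
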